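/- For any Borel probability measure μ on Cantor space and any ε > 0, there exists a dyadic additive premeasure ν* with ν*(ε-string) = 2 such that for every binary string σ, μ[σ] < ν*(σ) < μ[σ] + 2^{-|σ|+1}. Consequently, the normalized measure ν = ν*/2 is a dyadic probability measure satisfying μ[σ] < 2ν[σ] for all σ; in particular ν is positive (ν[σ] > 0 for every σ). -/

import Mathlib

open MeasureTheory

/-- The basic clopen cylinder of all infinite binary sequences extending the string `σ`. -/
def cyl (σ : List Bool) : Set (ℕ → Bool) :=
  {X | ∀ i : ℕ, ∀ h : i < σ.length, X i = σ.get ⟨i, h⟩}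

/-- A real is dyadic if it equals `m / 2 ^ n` for naturals `m, n`. -/
def IsDyadic (x : ℝ) : Prop := ∃ m n : ℕ, x = (m : ℝ) / 2 ^ n

lemma dyadic_dense {p q : ℝ} (hp : 0 ≤ p) (h : p < q) :
    ∃ x : ℝ, IsDyadic x ∧ p < x ∧ x < q := by
  obtain ⟨n, hn⟩ : ∃ n : ℕ, ((2:ℝ)⁻¹) ^ n < q - p :=
    exists_pow_lt_of_lt_one (sub_pos.mpr h) (by norm_num)
  set m : ℕ := ⌊p * 2 ^ n⌋₊ + 1 with hm
  have h2n : (0:ℝ) < 2 ^ n := by positivity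
  have h1 : p * 2 ^ n < m := Nat.lt_succ_floor _
  have h2 : (m : ℝ) ≤ p * 2 ^ n + 1 := by
    have := Nat.floor_le (by positivity : (0:ℝ) ≤ p * 2 ^ n)
    push_cast [hm]
    linarith
  refine ⟨(m : ℝ) / 2 ^ n, ⟨m, n, rfl⟩, ?_, ?_⟩
  · rw [lt_div_iff₀ h2n]; exact h1
  · rw [div_lt_iff₀ h2n]
    have : (2:ℝ)⁻¹ ^ n * 2 ^ n = 1 := by
      rw [← mul_pow]; norm_num
    nlinarith [hn]

lemma dyadic_sub {x y : ℝ} (hx : IsDyadic x) (hy : IsDyadic y) (h : y ≤ x) :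
    IsDyadic (x - y) := by
  obtain ⟨m1, n1, rfl⟩ := hx
  obtain ⟨m2, n2, rfl⟩ := hy
  have hle : m2 * 2 ^ n1 ≤ m1 * 2 ^ n2 := by
    have h1 : (0:ℝ) < 2 ^ n1 := by positivity
    have h2 : (0:ℝ) < 2 ^ n2 := by positivity
    rw [div_le_div_iff₀ h2 h1] at h
    exact_mod_cast h
  refine ⟨m1 * 2 ^ n2 - m2 * 2 ^ n1, n1 + n2, ?_⟩
  have : ((m1 * 2 ^ n2 - m2 * 2 ^ n1 : ℕ) : ℝ) = m1 * 2 ^ n2 - m2 * 2 ^ n1 := by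
    push_cast [Nat.cast_sub hle]; ring
  rw [this]
  field_simp
  ring

/-- choose a dyadic in `(p, q)` if possible, else `1`. -/
noncomputable def pick (p q : ℝ) : ℝ :=
  if h : 0 ≤ p ∧ p < q then (dyadic_dense h.1 h.2).choose else 1

lemma pick_spec {p q : ℝ} (hp : 0 ≤ p) (h : p < q) :
    IsDyadic (pick p q) ∧ p < pick p q ∧ pick p q < q := by
  rw [pick, dif_pos ⟨hp, h⟩]
  exact (dyadic_dense hp h).choose_spec

lemma cyl_nil : cyl [] = Set.univ := by
  ext X; simp [cyl]

lemma cyl_append (σ : List Bool) (b : Bool) :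
    cyl (σ ++ [b]) = cyl σ ∩ {X | X σ.length = b} := by
  ext X
  simp only [cyl, Set.mem_setOf_eq, Set.mem_inter_iff, List.length_append, List.length_singleton]
  constructor
  · intro h
    refine ⟨fun i hi => ?_, ?_⟩
    · have := h i (by omega)
      simp only [List.get_eq_getElem, List.getElem_append_left hi] at this ⊢; exact this
    · have := h σ.length (by omega)
      simpa using this
  · rintro ⟨h1, h2⟩ i hi
    rcases lt_or_eq_of_le (Nat.lt_succ_iff.mp hi) with hi' | hi'
    · simp only [List.get_eq_getElem, List.getElem_append_left hi']
      exact h1 i hi'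
    · subst hi'
      simpa using h2

lemma measurableSet_cyl (σ : List Bool) : MeasurableSet (cyl σ) := by
  have : cyl σ = ⋂ (i : Fin σ.length), (fun X : ℕ → Bool => X i) ⁻¹' {σ.get i} := by
    ext X
    simp [cyl, Set.mem_iInter]
    exact ⟨fun h i => h i i.isLt, fun h i hi => h ⟨i, hi⟩⟩
  rw [this]
  exact MeasurableSet.iInter fun i => (measurable_pi_apply _) (measurableSet_singleton _)

lemma measure_cyl_split (μ : Measure (ℕ → Bool)) (σ : List Bool) :
    μ (cyl σ) = μ (cyl (σ ++ [false])) + μ (cyl (σ ++ [true])) := by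
  rw [cyl_append, cyl_append]
  have hm : MeasurableSet {X : ℕ → Bool | X σ.length = true} :=
    (measurable_pi_apply _) (measurableSet_singleton _)
  have hu : cyl σ ∩ {X | X σ.length = false} = cyl σ \ {X | X σ.length = true} := by
    ext X
    simp only [Set.mem_inter_iff, Set.mem_setOf_eq, Set.mem_diff, Bool.not_eq_true]
  rw [hu, ← measure_diff_add_inter _ hm]

/-- The recursive construction of the dyadic premeasure, indexed by *reversed* strings. -/
noncomputable def nu (μ : Measure (ℕ → Bool)) : List Bool → ℝ
  | [] => 2
  | b :: τ =>
      cond b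
        (nu μ τ - pick
          (max (μ (cyl (τ.reverse ++ [false]))).toReal
            (nu μ τ - (μ (cyl (τ.reverse ++ [true]))).toReal - (2:ℝ) ^ (-(τ.length:ℤ))))
          (min ((μ (cyl (τ.reverse ++ [false]))).toReal + (2:ℝ) ^ (-(τ.length:ℤ)))
            (nu μ τ - (μ (cyl (τ.reverse ++ [true]))).toReal)))
        (pick
          (max (μ (cyl (τ.reverse ++ [false]))).toReal
            (nu μ τ - (μ (cyl (τ.reverse ++ [true]))).toReal - (2:ℝ) ^ (-(τ.length:ℤ))))
          (min ((μ (cyl (τ.reverse ++ [false]))).toReal + (2:ℝ) ^ (-(τ.length:ℤ)))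
            (nu μ τ - (μ (cyl (τ.reverse ++ [true]))).toReal)))

lemma nu_invariant (μ : Measure (ℕ → Bool)) [IsProbabilityMeasure μ] (τ : List Bool) :
    (μ (cyl τ.reverse)).toReal < nu μ τ ∧
      nu μ τ < (μ (cyl τ.reverse)).toReal + (2:ℝ) ^ (1 - (τ.length : ℤ)) ∧
      IsDyadic (nu μ τ) := by
  induction τ with
  | nil =>
    simp only [List.reverse_nil, cyl_nil, measure_univ, ENNReal.toReal_one, nu,
      List.length_nil, Nat.cast_zero]
    norm_num
    exact ⟨2, 0, by norm_num⟩
  | cons b τ ih =>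
    obtain ⟨ih1, ih2, ih3⟩ := ih
    set a := (μ (cyl (τ.reverse ++ [false]))).toReal with ha
    set bb := (μ (cyl (τ.reverse ++ [true]))).toReal with hbb
    set v := nu μ τ with hv
    set n := τ.length with hn
    have hsplit : (μ (cyl τ.reverse)).toReal = a + bb := by
      rw [measure_cyl_split μ τ.reverse,
        ENNReal.toReal_add (measure_ne_top μ _) (measure_ne_top μ _)]
    have ha0 : 0 ≤ a := ENNReal.toReal_nonneg
    have hbb0 : 0 ≤ bb := ENNReal.toReal_nonneg
    have h2n : (0:ℝ) < (2:ℝ) ^ (-(n:ℤ)) := by positivity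
    have hpow : (2:ℝ) ^ (1 - (n:ℤ)) = 2 * (2:ℝ) ^ (-(n:ℤ)) := by
      rw [show (1 - (n:ℤ)) = 1 + (-(n:ℤ)) by ring, zpow_add₀ (by norm_num : (2:ℝ) ≠ 0)]
      norm_num
    rw [hsplit] at ih1 ih2
    set L := max a (v - bb - (2:ℝ) ^ (-(n:ℤ))) with hL
    set R := min (a + (2:ℝ) ^ (-(n:ℤ))) (v - bb) with hR
    have hL0 : 0 ≤ L := le_max_of_le_left ha0
    have hLR : L < R := by
      rw [hpow] at ih2
      apply max_lt <;> apply lt_min <;> linarith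
    obtain ⟨hdy, hp1, hp2⟩ := pick_spec hL0 hLR
    have hx1 : a < pick L R := lt_of_le_of_lt (le_max_left _ _) hp1
    have hx2 : pick L R < a + (2:ℝ) ^ (-(n:ℤ)) := lt_of_lt_of_le hp2 (min_le_left _ _)
    have hx3 : v - bb - (2:ℝ) ^ (-(n:ℤ)) < pick L R :=
      lt_of_le_of_lt (le_max_right _ _) hp1
    have hx4 : pick L R < v - bb := lt_of_lt_of_le hp2 (min_le_right _ _)
    have hlen : (1 - ((b :: τ).length : ℤ)) = -(n:ℤ) := by
      simp only [List.length_cons, hn]; push_cast; ring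
    have hrev : (b :: τ).reverse = τ.reverse ++ [b] := by simp
    cases b with
    | false =>
      have hnu : nu μ (false :: τ) = pick L R := by
        simp only [nu, cond_false, hL, hR]; rfl
      rw [hrev, hnu, hlen]
      exact ⟨hx1, hx2, hdy⟩
    | true =>
      have hnu : nu μ (true :: τ) = v - pick L R := by
        simp only [nu, cond_true, hL, hR]; rfl
      rw [hrev, hnu, hlen]
      refine ⟨by linarith, by linarith, dyadic_sub ih3 hdy ?_⟩
      linarith

/-- Schnorr-style rationalization: every Borel probability measure on Cantor space is
closely approximated by a dyadic additive premeasure `ν*` with `ν*(ε) = 2`, so that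
`μ[σ] < ν*(σ) < μ[σ] + 2^{-|σ|+1}`; the normalization `ν = ν*/2` is a positive dyadic
probability premeasure with `μ[σ] < 2ν[σ]`. -/
theorem dyadic_approximation (μ : Measure (ℕ → Bool)) [IsProbabilityMeasure μ]
    (ε : ℝ) (hε : 0 < ε) :
    ∃ νstar : List Bool → ℝ,
      νstar [] = 2 ∧
      (∀ σ : List Bool, νstar σ = νstar (σ ++ [false]) + νstar (σ ++ [true])) ∧
      (∀ σ : List Bool, ∃ m n : ℕ, νstar σ = (m : ℝ) / 2 ^ n) ∧
      (∀ σ : List Bool,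
        (μ (cyl σ)).toReal < νstar σ ∧
          νstar σ < (μ (cyl σ)).toReal + (2 : ℝ) ^ (1 - (σ.length : ℤ))) ∧
      (∀ σ : List Bool, (μ (cyl σ)).toReal < 2 * (νstar σ / 2)) ∧
      (∀ σ : List Bool, 0 < νstar σ / 2) := by
  refine ⟨fun σ => nu μ σ.reverse, rfl, ?_, ?_, ?_, ?_, ?_⟩
  · intro σ
    have hf : (σ ++ [false]).reverse = false :: σ.reverse := by simp
    have ht : (σ ++ [true]).reverse = true :: σ.reverse := by simp
    show nu μ σ.reverse = nu μ (σ ++ [false]).reverse + nu μ (σ ++ [true]).reverse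
    rw [hf, ht]
    simp only [nu, cond_false, cond_true]
    ring
  · intro σ
    exact (nu_invariant μ σ.reverse).2.2
  · intro σ
    have h := nu_invariant μ σ.reverse
    rw [List.reverse_reverse, List.length_reverse] at h
    exact ⟨h.1, h.2.1⟩
  · intro σ
    have h := (nu_invariant μ σ.reverse).1
    rw [List.reverse_reverse] at h
    linarith
  · intro σ
    have h := (nu_invariant μ σ.reverse).1
    have : (0:ℝ) ≤ (μ (cyl σ.reverse.reverse)).toReal := ENNReal.toReal_nonneg
    linarith
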